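/- Let V be convex and continuous on [-1,1], not affine, and let ψ : [-1,1] → ℝ be continuous with ψ < 0 on (ξ_-, ξ_+) and ψ > 0 on [-1,1] \ [ξ_-, ξ_+] for some ξ_- < ξ_+. Let L be the affine function agreeing with V at ξ_- and ξ_+. Then ∫_{-1}^1 (V - L) ψ dx > 0. -/

import Mathlib

open Set intervalIntegral MeasureTheory

theorem convex_vs_linear_integral_positive
    (V : ℝ → ℝ) (hVconv : ConvexOn ℝ (Icc (-1:ℝ) 1) V)
    (hVc : ContinuousOn V (Icc (-1:ℝ) 1))
    (hVnotaff : ¬ ∃ a b : ℝ, ∀ x ∈ Icc (-1:ℝ) 1, V x = a * x + b)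
    (ψ : ℝ → ℝ) (hψc : ContinuousOn ψ (Icc (-1:ℝ) 1))
    (ξm ξp : ℝ) (hξm : ξm ∈ Icc (-1:ℝ) 1) (hξp : ξp ∈ Icc (-1:ℝ) 1)
    (hlt : ξm < ξp)
    (hneg : ∀ x ∈ Ioo ξm ξp, ψ x < 0)
    (hpos : ∀ x ∈ Icc (-1:ℝ) 1 \ Icc ξm ξp, 0 < ψ x)
    (a b : ℝ)
    (hLm : a * ξm + b = V ξm) (hLp : a * ξp + b = V ξp) :
    0 < ∫ x in (-1:ℝ)..1, (V x - (a * x + b)) * ψ x := by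
  set g : ℝ → ℝ := fun x => (V x - (a * x + b)) * ψ x with hg
  have hd : (0:ℝ) < ξp - ξm := by linarith
  -- V ≤ L on [ξm, ξp]
  have hle : ∀ x ∈ Icc ξm ξp, V x ≤ a * x + b := by
    intro x hx
    set t : ℝ := (ξp - x) / (ξp - ξm) with ht'
    set s : ℝ := (x - ξm) / (ξp - ξm) with hs'
    have ht : 0 ≤ t := div_nonneg (by linarith [hx.2]) (by linarith)
    have hs : 0 ≤ s := div_nonneg (by linarith [hx.1]) (by linarith)
    have hts : t + s = 1 := by rw [ht', hs']; field_simp; ring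
    have hxe : t * ξm + s * ξp = x := by rw [ht', hs']; field_simp; ring
    have key := hVconv.2 hξm hξp ht hs hts
    simp only [smul_eq_mul, hxe] at key
    have e : t * (a * ξm + b) + s * (a * ξp + b) = a * x + b := by
      linear_combination a * hxe + b * hts
    rw [hLm, hLp] at e
    linarith
  -- L ≤ V left of ξm
  have hge1 : ∀ x ∈ Icc (-1:ℝ) 1, x ≤ ξm → a * x + b ≤ V x := by
    intro x hx hxm
    rcases eq_or_lt_of_le hxm with h | h
    · rw [h]; linarith [hLm]
    · set t : ℝ := (ξp - ξm) / (ξp - x) with ht'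
      set s : ℝ := (ξm - x) / (ξp - x) with hs'
      have hdx : (0:ℝ) < ξp - x := by linarith
      have ht : 0 < t := div_pos (by linarith) (by linarith)
      have hs : 0 ≤ s := div_nonneg (by linarith) (by linarith)
      have hts : t + s = 1 := by rw [ht', hs']; field_simp; ring
      have hxe : t * x + s * ξp = ξm := by rw [ht', hs']; field_simp; ring
      have key := hVconv.2 hx hξp ht.le hs hts
      simp only [smul_eq_mul, hxe] at key
      have e : t * (a * x + b) + s * (a * ξp + b) = a * ξm + b := by
        linear_combination a * hxe + b * hts
      rw [hLp] at e
      rw [← hLm, ← e] at key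
      have : t * (a * x + b) ≤ t * V x := by linarith
      exact le_of_mul_le_mul_left this ht
  -- L ≤ V right of ξp
  have hge2 : ∀ x ∈ Icc (-1:ℝ) 1, ξp ≤ x → a * x + b ≤ V x := by
    intro x hx hxp
    rcases eq_or_lt_of_le hxp with h | h
    · rw [← h]; linarith [hLp]
    · set t : ℝ := (x - ξp) / (x - ξm) with ht'
      set s : ℝ := (ξp - ξm) / (x - ξm) with hs'
      have hdx : (0:ℝ) < x - ξm := by linarith
      have ht : 0 ≤ t := div_nonneg (by linarith) (by linarith)
      have hs : 0 < s := div_pos (by linarith) (by linarith)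
      have hts : t + s = 1 := by rw [ht', hs']; field_simp; ring
      have hxe : t * ξm + s * x = ξp := by rw [ht', hs']; field_simp; ring
      have key := hVconv.2 hξm hx ht hs.le hts
      simp only [smul_eq_mul, hxe] at key
      have e : t * (a * ξm + b) + s * (a * x + b) = a * ξp + b := by
        linear_combination a * hxe + b * hts
      rw [hLm] at e
      rw [← hLp, ← e] at key
      have : s * (a * x + b) ≤ s * V x := by linarith
      exact le_of_mul_le_mul_left this hs
  -- g nonneg on [-1,1]
  have hgnn : ∀ x ∈ Icc (-1:ℝ) 1, 0 ≤ g x := by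
    intro x hx
    show 0 ≤ (V x - (a * x + b)) * ψ x
    by_cases hmem : x ∈ Icc ξm ξp
    · rcases eq_or_lt_of_le hmem.1 with h | h
      · simp [hg, ← h, ← hLm]
      · rcases eq_or_lt_of_le hmem.2 with h2 | h2
        · simp [hg, h2, ← hLp]
        · have h1 : V x - (a * x + b) ≤ 0 := by linarith [hle x hmem]
          have h2' : ψ x < 0 := hneg x ⟨h, h2⟩
          nlinarith [mul_nonneg (neg_nonneg.mpr h1) (neg_nonneg.mpr h2'.le)]
    · have hψ : 0 < ψ x := hpos x ⟨hx, hmem⟩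
      have hVL : 0 ≤ V x - (a * x + b) := by
        by_cases hl : x < ξm
        · linarith [hge1 x hx hl.le]
        · have hr : ξp < x := by
            by_contra h'; exact hmem ⟨not_lt.mp hl, not_lt.mp h'⟩
          linarith [hge2 x hx hr.le]
      exact mul_nonneg hVL hψ.le
  -- a point where g is strictly positive
  push_neg at hVnotaff
  obtain ⟨x0, hx0, hVneq⟩ := hVnotaff a b
  have hgx0 : 0 < g x0 := by
    show 0 < (V x0 - (a * x0 + b)) * ψ x0
    by_cases hmem : x0 ∈ Icc ξm ξp
    · have h1 : V x0 - (a * x0 + b) < 0 :=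
        lt_of_le_of_ne (by linarith [hle x0 hmem]) (fun h => hVneq (by linarith))
      have hm : x0 ≠ ξm := fun h => hVneq (by rw [h]; linarith)
      have hp : x0 ≠ ξp := fun h => hVneq (by rw [h]; linarith)
      have h2 : ψ x0 < 0 := hneg x0 ⟨lt_of_le_of_ne hmem.1 (Ne.symm hm), lt_of_le_of_ne hmem.2 hp⟩
      exact mul_pos_of_neg_of_neg h1 h2
    · have hψ : 0 < ψ x0 := hpos x0 ⟨hx0, hmem⟩
      have hVL : 0 ≤ V x0 - (a * x0 + b) := by
        by_cases hl : x0 < ξm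
        · linarith [hge1 x0 hx0 hl.le]
        · have hr : ξp < x0 := by
            by_contra h'; exact hmem ⟨not_lt.mp hl, not_lt.mp h'⟩
          linarith [hge2 x0 hx0 hr.le]
      exact mul_pos (lt_of_le_of_ne hVL (fun h => hVneq (by linarith))) hψ
  -- continuity of g
  have hgc : ContinuousOn g (Icc (-1:ℝ) 1) :=
    (hVc.sub ((continuous_const.mul continuous_id).add continuous_const).continuousOn).mul hψc
  -- neighborhood of positivity
  have hev : ∀ᶠ x in nhdsWithin x0 (Icc (-1:ℝ) 1), 0 < g x :=
    (hgc x0 hx0).eventually (eventually_gt_nhds hgx0)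
  rw [Filter.eventually_iff, Metric.mem_nhdsWithin_iff] at hev
  obtain ⟨ε, hε, hball⟩ := hev
  set c : ℝ := max (-1) (x0 - ε/2) with hc
  set d : ℝ := min 1 (x0 + ε/2) with hd'
  have hcd : c < d := by
    rcases hx0 with ⟨h1, h2⟩
    apply max_lt <;> apply lt_min <;> linarith
  have hsub : Ioo c d ⊆ Function.support g ∩ Ioc (-1:ℝ) 1 := by
    intro x hx
    have hc1 : -1 ≤ c := le_max_left _ _
    have hc2 : x0 - ε/2 ≤ c := le_max_right _ _
    have hd1 : d ≤ 1 := min_le_left _ _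
    have hd2 : d ≤ x0 + ε/2 := min_le_right _ _
    have hxI : x ∈ Icc (-1:ℝ) 1 := ⟨by linarith [hx.1], by linarith [hx.2]⟩
    have hxb : x ∈ Metric.ball x0 ε := by
      rw [Metric.mem_ball, Real.dist_eq, abs_lt]
      constructor <;> [linarith [hx.1]; linarith [hx.2]]
    have : 0 < g x := hball ⟨hxb, hxI⟩
    exact ⟨ne_of_gt this, ⟨by linarith [hx.1], by linarith [hx.2]⟩⟩
  have hint : IntegrableOn g (Ioc (-1:ℝ) 1) volume :=
    (hgc.integrableOn_Icc).mono_set Ioc_subset_Icc_self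
  rw [intervalIntegral.integral_of_le (by norm_num : (-1:ℝ) ≤ 1)]
  rw [MeasureTheory.setIntegral_pos_iff_support_of_nonneg_ae
      ((ae_restrict_iff' measurableSet_Ioc).mpr
        (Filter.Eventually.of_forall fun x hx => hgnn x (Ioc_subset_Icc_self hx)))
      hint]
  calc (0:ENNReal) < volume (Ioo c d) := by simp [Real.volume_Ioo, hcd]
    _ ≤ volume (Function.support g ∩ Ioc (-1:ℝ) 1) := measure_mono hsub
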